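/- Let k₀ ∈ ℕ be odd, ω = k₀/2 and A > 0. Then there exists κ₀ ∈ ℕ such that for every odd integer κ ≥ κ₀ and every α ∈ [0, A]: |(m + a(l))² − ω²k² + α| ≥ κ·δ₀/4 for all l ∈ (−1/2, 1/2], all m ∈ ℤ and all k ∈ κℤ_odd. In particular the infimum of |(m + a(l))² − ω²k² + α| over these parameters is strictly positive. -/

import Mathlib

/-- The Floquet exponent function of the necklace graph. -/
noncomputable def blochA (l : ℝ) : ℝ :=
  (1 / (2 * Real.pi)) * Real.arccos ((1 / 9) * (8 * Real.cos (2 * Real.pi * l) + 1))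

/-- The constant `δ₀ = 1 - arccos(-7/9)/π`. -/
noncomputable def delta0 : ℝ := 1 - Real.arccos (-7 / 9) / Real.pi

/-- The set `κ·ℤ_odd = {κ·j : j odd}`. -/
def kappaOdd (κ : ℤ) : Set ℤ := {k | ∃ j : ℤ, Odd j ∧ k = κ * j}

lemma delta0_pos : 0 < delta0 := by
  have hπ := Real.pi_pos
  have h1 : Real.arccos (-7 / 9) < Real.pi := by
    have : -(Real.pi / 2) < Real.arcsin (-7 / 9) :=
      Real.neg_pi_div_two_lt_arcsin.2 (by norm_num)
    rw [Real.arccos]; linarith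
  unfold delta0
  rw [sub_pos, div_lt_one hπ]
  exact h1

lemma delta0_lt_one : delta0 < 1 := by
  have hπ := Real.pi_pos
  have h1 : 0 < Real.arccos (-7 / 9) := Real.arccos_pos.2 (by norm_num)
  unfold delta0
  have : 0 < Real.arccos (-7 / 9) / Real.pi := div_pos h1 hπ
  linarith

lemma blochA_mem (l : ℝ) : 0 ≤ blochA l ∧ blochA l ≤ 1 / 2 - delta0 / 2 := by
  have hπ := Real.pi_pos
  set t : ℝ := (1 / 9) * (8 * Real.cos (2 * Real.pi * l) + 1) with ht
  have hc1 : -1 ≤ Real.cos (2 * Real.pi * l) := Real.neg_one_le_cos _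
  have hc2 : Real.cos (2 * Real.pi * l) ≤ 1 := Real.cos_le_one _
  have htl : -7 / 9 ≤ t := by rw [ht]; nlinarith
  have hmono : Real.arccos t ≤ Real.arccos (-7 / 9) := by
    have := Real.monotone_arcsin htl
    rw [Real.arccos, Real.arccos]; linarith
  have harcval : Real.arccos (-7 / 9) = Real.pi * (1 - delta0) := by
    unfold delta0; field_simp; ring
  constructor
  · exact mul_nonneg (by positivity) (Real.arccos_nonneg _)
  · have h2π : 0 < 2 * Real.pi := by linarith
    unfold blochA
    rw [← ht]
    have : (1 / (2 * Real.pi)) * Real.arccos t ≤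
        (1 / (2 * Real.pi)) * (Real.pi * (1 - delta0)) := by
      apply mul_le_mul_of_nonneg_left _ (by positivity)
      rw [← harcval]; exact hmono
    calc (1 / (2 * Real.pi)) * Real.arccos t
        ≤ (1 / (2 * Real.pi)) * (Real.pi * (1 - delta0)) := this
      _ = 1 / 2 - delta0 / 2 := by field_simp

/-- Distance from `m + a` to any odd half-integer is at least `δ₀/2`. -/
lemma half_dist (a : ℝ) (ha : 0 ≤ a) (ha' : a ≤ 1 / 2 - delta0 / 2)
    (m N : ℤ) (hN : Odd N) : delta0 / 2 ≤ |(m : ℝ) + a - (N : ℝ) / 2| := by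
  have hδ1 := delta0_lt_one
  obtain ⟨p, hp⟩ := hN
  have key : (m : ℝ) + a - (N : ℝ) / 2 = ((m - p : ℤ) : ℝ) + (a - 1 / 2) := by
    push_cast [hp]; ring
  rw [key]
  rcases le_or_gt (m - p) 0 with hq | hq
  · have hq' : ((m - p : ℤ) : ℝ) ≤ 0 := by exact_mod_cast hq
    have h1 : ((m - p : ℤ) : ℝ) + (a - 1 / 2) ≤ -(delta0 / 2) := by linarith
    have := neg_le_abs (((m - p : ℤ) : ℝ) + (a - 1 / 2))
    linarith
  · have hq' : (1 : ℝ) ≤ ((m - p : ℤ) : ℝ) := by exact_mod_cast hq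
    have h1 : delta0 / 2 ≤ ((m - p : ℤ) : ℝ) + (a - 1 / 2) := by linarith
    exact h1.trans (le_abs_self _)

lemma prod_bound (f₁ f₂ K A : ℝ) (hδ1 : delta0 < 1)
    (h1 : delta0 / 2 ≤ f₁) (h2 : delta0 / 2 ≤ f₂) (hsum : K ≤ f₁ + f₂)
    (hK1 : 4 * A ≤ K * (1 - delta0)) (hK2 : 4 * A + delta0 ≤ K * delta0)
    (hA : 0 < A) : K * delta0 / 4 + A ≤ f₁ * f₂ := by
  have hδ := delta0_pos
  rcases le_total f₁ f₂ with h | h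
  · rcases le_or_gt (1 / 2) f₁ with hc | hc
    · nlinarith [mul_le_mul h2 h (by linarith : (0:ℝ) ≤ f₁) (by linarith : (0:ℝ) ≤ f₂)]
    · nlinarith
  · rcases le_or_gt (1 / 2) f₂ with hc | hc
    · nlinarith [mul_le_mul h1 h (by linarith : (0:ℝ) ≤ f₂) (by linarith : (0:ℝ) ≤ f₁)]
    · nlinarith

/-- (Spectral gap condition, Lemma 4.4.) For `ω = k₀/2` with `k₀` odd
and `A > 0` there is `κ₀` such that for all odd `κ ≥ κ₀` and all `α ∈ [0, A]` the band
values satisfy `|(m + a(l))² - ω²k² + α| ≥ κ δ₀ / 4` for all `l ∈ (-1/2, 1/2]`, `m ∈ ℤ`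
and `k ∈ κℤ_odd`; in particular the infimum of these quantities is strictly positive. -/
theorem spectral_gap_condition (k₀ : ℕ) (hk₀ : Odd k₀) (A : ℝ) (hA : 0 < A) :
    ∃ κ₀ : ℕ, ∀ κ : ℤ, Odd κ → (κ₀ : ℤ) ≤ κ → ∀ α ∈ Set.Icc (0 : ℝ) A,
      (0 : ℝ) < (κ : ℝ) * delta0 / 4 ∧
      ∀ l ∈ Set.Ioc (-(1 / 2) : ℝ) (1 / 2), ∀ m : ℤ, ∀ k ∈ kappaOdd κ,
        |((m : ℝ) + blochA l) ^ 2 - ((k₀ : ℝ) / 2) ^ 2 * ((k : ℤ) : ℝ) ^ 2 + α| ≥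
          (κ : ℝ) * delta0 / 4 := by
  have hδ := delta0_pos
  have hδ1 := delta0_lt_one
  refine ⟨⌈4 * A / (1 - delta0)⌉₊ + ⌈4 * A / delta0⌉₊ + 1, ?_⟩
  intro κ hκodd hκ₀ α hα
  have hcast : ((⌈4 * A / (1 - delta0)⌉₊ + ⌈4 * A / delta0⌉₊ + 1 : ℕ) : ℝ) ≤ (κ : ℝ) := by
    exact_mod_cast hκ₀
  have hceil1 : 4 * A / (1 - delta0) ≤ (⌈4 * A / (1 - delta0)⌉₊ : ℝ) := Nat.le_ceil _
  have hceil2 : 4 * A / delta0 ≤ (⌈4 * A / delta0⌉₊ : ℝ) := Nat.le_ceil _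
  push_cast at hcast
  have hκ1 : (1 : ℝ) ≤ (κ : ℝ) := by
    have : (0 : ℝ) ≤ (⌈4 * A / (1 - delta0)⌉₊ : ℝ) := Nat.cast_nonneg _
    have : (0 : ℝ) ≤ (⌈4 * A / delta0⌉₊ : ℝ) := Nat.cast_nonneg _
    linarith [Nat.cast_nonneg (α := ℝ) ⌈4 * A / (1 - delta0)⌉₊]
  have hK1 : 4 * A ≤ (κ : ℝ) * (1 - delta0) := by
    have h := (div_le_iff₀ (by linarith : (0:ℝ) < 1 - delta0)).mp
      (hceil1.trans (by linarith [Nat.cast_nonneg (α := ℝ) ⌈4 * A / delta0⌉₊]))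
    exact h
  have hK2 : 4 * A + delta0 ≤ (κ : ℝ) * delta0 := by
    have h2 : 4 * A / delta0 + 1 ≤ (κ : ℝ) := by
      linarith [Nat.cast_nonneg (α := ℝ) ⌈4 * A / (1 - delta0)⌉₊]
    have := (div_le_iff₀ hδ).mp (by linarith : 4 * A / delta0 ≤ (κ : ℝ) - 1)
    nlinarith
  obtain ⟨hα0, hαA⟩ := hα
  refine ⟨by positivity, ?_⟩
  intro l _ m k hk
  obtain ⟨j, hj, rfl⟩ := hk
  obtain ⟨ha0, ha1⟩ := blochA_mem l
  set a := blochA l with ha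
  set N : ℤ := (k₀ : ℤ) * (κ * j) with hN
  have hNodd : Odd N := by
    have h1 : Odd ((k₀ : ℤ)) := by exact_mod_cast hk₀
    exact h1.mul (hκodd.mul hj)
  set x : ℝ := (m : ℝ) + a with hx
  have hf1 : delta0 / 2 ≤ |x - (N : ℝ) / 2| := half_dist a ha0 ha1 m N hNodd
  have hf2 : delta0 / 2 ≤ |x + (N : ℝ) / 2| := by
    have := half_dist a ha0 ha1 m (-N) hNodd.neg
    rw [show (m : ℝ) + a - ((-N : ℤ) : ℝ) / 2 = x + (N : ℝ) / 2 by push_cast; ring] at this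
    exact this
  -- |N| ≥ κ
  have hk₀1 : (1 : ℤ) ≤ (k₀ : ℤ) := by
    rcases Nat.eq_zero_or_pos k₀ with h | h
    · exact absurd (h ▸ hk₀) (by decide)
    · exact_mod_cast h
  have hj1 : (1 : ℤ) ≤ |j| := by
    rcases eq_or_ne j 0 with rfl | h
    · exact absurd hj (by decide)
    · exact Int.one_le_abs h
  have hκZ : (1 : ℤ) ≤ κ := by exact_mod_cast hκ1
  have hNabs : (κ : ℤ) ≤ |N| := by
    rw [hN, abs_mul, abs_mul, abs_of_nonneg (by linarith : (0:ℤ) ≤ (k₀ : ℤ)),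
      abs_of_nonneg (by linarith : (0:ℤ) ≤ κ)]
    have h1 : κ * 1 ≤ κ * |j| := mul_le_mul_of_nonneg_left hj1 (by linarith)
    have h2 : 1 * (κ * |j|) ≤ (k₀ : ℤ) * (κ * |j|) :=
      mul_le_mul_of_nonneg_right hk₀1 (by nlinarith)
    linarith
  have hNabsR : (κ : ℝ) ≤ |(N : ℝ)| := by
    rw [← Int.cast_abs]; exact_mod_cast hNabs
  have hsum : (κ : ℝ) ≤ |x - (N : ℝ) / 2| + |x + (N : ℝ) / 2| := by
    have h := abs_sub (x + (N : ℝ) / 2) (x - (N : ℝ) / 2)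
    rw [show x + (N : ℝ) / 2 - (x - (N : ℝ) / 2) = (N : ℝ) by ring] at h
    linarith [hNabsR]
  have hprod := prod_bound (|x - (N : ℝ) / 2|) (|x + (N : ℝ) / 2|) (κ : ℝ) A
    hδ1 hf1 hf2 hsum hK1 hK2 hA
  have hdiff : |x ^ 2 - ((N : ℝ) / 2) ^ 2| = |x - (N : ℝ) / 2| * |x + (N : ℝ) / 2| := by
    rw [← abs_mul]; ring_nf
  have hrw : ((k₀ : ℝ) / 2) ^ 2 * ((κ * j : ℤ) : ℝ) ^ 2 = ((N : ℝ) / 2) ^ 2 := by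
    rw [hN]; push_cast; ring
  rw [hrw]
  have htri := abs_sub (x ^ 2 - ((N : ℝ) / 2) ^ 2 + α) α
  rw [show x ^ 2 - ((N : ℝ) / 2) ^ 2 + α - α = x ^ 2 - ((N : ℝ) / 2) ^ 2 by ring] at htri
  have hαabs : |α| ≤ A := by rw [abs_of_nonneg hα0]; exact hαA
  rw [ge_iff_le, hx]
  rw [hdiff] at htri
  linarith
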